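/- Define V(ε) = (1/3)·(2/3)^{⌊log_3(1/ε)⌋} for ε ∈ (0,1). Then the limit of ε^{−(1−D)} V(ε) as ε → 0⁺ does not exist, where D = log 2/log 3; however, the logarithmic Cesàro average lim_{T→∞} (1/log T) ∫_{1/T}^1 ε^{−(1−D)} V(ε) dε/ε exists and equals 1/(6(log 3 − log 2)). -/

import Mathlib

open Filter MeasureTheory Set

noncomputable def cantorTubeVolume (ε : ℝ) : ℝ :=
  (1 / 3) * (2 / 3 : ℝ) ^ ⌊Real.log (1 / ε) / Real.log 3⌋

namespace CA
noncomputable def D : ℝ := Real.log 2 / Real.log 3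
noncomputable def f (ε : ℝ) : ℝ := ε ^ (-(1 - D)) * cantorTubeVolume ε / ε
noncomputable def c : ℝ := Real.log 3 / (6 * (Real.log 3 - Real.log 2))
noncomputable def p (k : ℕ) : ℝ := ((3:ℝ) ^ k)⁻¹

lemma hl3 : 0 < Real.log 3 := Real.log_pos (by norm_num)
lemma hl2 : 0 < Real.log 2 := Real.log_pos (by norm_num)
lemma hll : Real.log 2 < Real.log 3 := Real.log_lt_log (by norm_num) (by norm_num)
lemma hD0 : 0 < D := div_pos hl2 hl3
lemma hD1 : D < 1 := (div_lt_one hl3).2 hll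
lemma h3D : (3:ℝ) ^ D = 2 := by
  rw [D, Real.rpow_def_of_pos (by norm_num), mul_div_cancel₀ _ hl3.ne',
    Real.exp_log (by norm_num)]
lemma hc_pos : 0 < c := div_pos hl3 (by nlinarith [hll])
lemma hp_pos (k : ℕ) : 0 < p k := by rw [p]; positivity
lemma hp_anti {k l : ℕ} (h : k ≤ l) : p l ≤ p k := by
  apply inv_anti₀ (by positivity)
  exact pow_le_pow_right₀ (by norm_num) h
lemma hp_lt (k : ℕ) : p (k+1) < p k := by
  rw [p, p]
  apply inv_strictAnti₀ (by positivity)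
  exact pow_lt_pow_right₀ (by norm_num) (Nat.lt_succ_self k)
lemma hab (k : ℕ) : p (k+1) ≤ p k := hp_anti (Nat.le_succ k)
lemma hp_rpow (k : ℕ) (r : ℝ) : p k ^ r = (3:ℝ) ^ (-(k:ℝ) * r) := by
  rw [p, ← Real.rpow_natCast 3 k, ← Real.rpow_neg (by norm_num),
    ← Real.rpow_mul (by norm_num)]
lemma hp_eq (k : ℕ) : p k = (3:ℝ) ^ (-(k:ℝ)) := by
  rw [← Real.rpow_one (p k), hp_rpow, mul_one]
lemma hp_log (k : ℕ) : Real.log (p k) = -(k : ℝ) * Real.log 3 := by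
  rw [p, Real.log_inv, Real.log_pow]; ring
lemma h32 : (3:ℝ) ^ ((1:ℝ) - D) = 3 / 2 := by
  rw [Real.rpow_sub (by norm_num), Real.rpow_one, h3D]
lemma hpk_rpow (k : ℕ) : p k ^ (D - 1) = (3/2 : ℝ) ^ k := by
  rw [hp_rpow, show -(k:ℝ)*(D-1) = (1-D)*(k:ℝ) by ring,
    Real.rpow_mul (by norm_num), h32, Real.rpow_natCast]

lemma meas_f : Measurable f := by
  have h1 : Measurable fun ε : ℝ => ⌊Real.log (1 / ε) / Real.log 3⌋ :=
    ((Real.measurable_log.comp (measurable_const.div measurable_id)).div_const _).floor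
  have h2 : Measurable cantorTubeVolume := by
    have : Measurable fun n : ℤ => (1 / 3 : ℝ) * (2 / 3 : ℝ) ^ n := measurable_from_top
    exact this.comp h1
  exact ((by fun_prop : Measurable fun ε : ℝ => ε ^ (-(1 - D))).mul h2).div measurable_id

lemma floor_eq {k : ℕ} {ε : ℝ} (h1 : p (k+1) < ε) (h2 : ε ≤ p k) :
    ⌊Real.log (1 / ε) / Real.log 3⌋ = (k : ℤ) := by
  have hε : 0 < ε := lt_trans (hp_pos _) h1
  have hle : Real.log ε ≤ -(k:ℝ) * Real.log 3 := by
    rw [← hp_log k]; exact Real.log_le_log hε h2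
  have hlt : -((k:ℝ)+1) * Real.log 3 < Real.log ε := by
    have := Real.log_lt_log (hp_pos (k+1)) h1
    rw [hp_log (k+1)] at this; push_cast at this; linarith
  rw [one_div, Real.log_inv, Int.floor_eq_iff]
  constructor
  · push_cast; rw [le_div_iff₀ hl3]; linarith
  · push_cast; rw [div_lt_iff₀ hl3]; linarith

lemma f_eq {k : ℕ} {ε : ℝ} (h1 : p (k+1) < ε) (h2 : ε ≤ p k) :
    f ε = ((1/3) * (2/3:ℝ)^k) * ε ^ (D - 2) := by
  have hε : 0 < ε := lt_trans (hp_pos _) h1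
  have hrp : ε ^ (-(1-D)) * ε⁻¹ = ε ^ (D-2) := by
    rw [← Real.rpow_neg_one ε, ← Real.rpow_add hε]
    congr 1; ring
  rw [f, cantorTubeVolume, floor_eq h1 h2, zpow_natCast, div_eq_mul_inv,
    mul_right_comm, hrp]
  ring

lemma piece (k : ℕ) : (∫ ε in (p (k+1))..(p k), f ε) = c := by
  have h1 : (∫ ε in (p (k+1))..(p k), f ε)
      = ∫ ε in (p (k+1))..(p k), ((1/3) * (2/3:ℝ)^k) * ε ^ (D - 2) := by
    rw [intervalIntegral.integral_of_le (hab k), intervalIntegral.integral_of_le (hab k)]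
    refine setIntegral_congr_fun measurableSet_Ioc fun ε hε => ?_
    exact f_eq hε.1 hε.2
  have h0 : (0:ℝ) ∉ Set.uIcc (p (k+1)) (p k) :=
    Set.notMem_uIcc_of_lt (hp_pos _) (hp_pos _)
  rw [h1, intervalIntegral.integral_const_mul,
    integral_rpow (Or.inr ⟨by have := hD1; intro h; rw [sub_eq_iff_eq_add] at h; norm_num at h; linarith, h0⟩),
    show D - 2 + 1 = D - 1 by ring, hpk_rpow, hpk_rpow]
  have key : (2/3:ℝ)^k * (3/2:ℝ)^k = 1 := by rw [← mul_pow]; norm_num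
  have e1 : ((3/2:ℝ)^k - (3/2:ℝ)^(k+1)) = -(1/2) * (3/2:ℝ)^k := by rw [pow_succ]; ring
  rw [e1, show (1/3 : ℝ) * (2/3:ℝ)^k * (-(1/2) * (3/2:ℝ)^k / (D-1))
      = (1/3) * (-(1/2)) * ((2/3:ℝ)^k*(3/2:ℝ)^k) / (D-1) by ring, key, c, D]
  have hne : Real.log 2 / Real.log 3 - 1 ≠ 0 := by have := hD1; rw [D] at this; linarith
  rw [div_eq_div_iff hne (by nlinarith [hll])]
  field_simp
  ring

lemma ctv_nonneg {ε : ℝ} : 0 ≤ cantorTubeVolume ε := by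
  rw [cantorTubeVolume]; positivity

lemma f_nonneg {ε : ℝ} (hε : 0 < ε) : 0 ≤ f ε := by
  rw [f]
  have := ctv_nonneg (ε := ε)
  positivity

lemma intg {a b : ℝ} (ha : 0 < a) (hab : a ≤ b) : IntegrableOn f (Set.Ioc a b) := by
  set n₀ : ℤ := ⌊Real.log (1/b) / Real.log 3⌋ with hn₀
  set M : ℝ := a ^ (-(1-D)) * ((1/3) * (2/3:ℝ)^n₀) * a⁻¹ with hM
  apply Measure.integrableOn_of_bounded (M := M) measure_Ioc_lt_top.ne
    meas_f.aestronglyMeasurable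
  filter_upwards [self_mem_ae_restrict measurableSet_Ioc] with ε hε
  obtain ⟨hε1, hε2⟩ := hε
  have hεpos : 0 < ε := ha.trans hε1
  have hb : 0 < b := hεpos.trans_le hε2
  rw [Real.norm_eq_abs, abs_of_nonneg (f_nonneg hεpos)]
  have hn : n₀ ≤ ⌊Real.log (1/ε) / Real.log 3⌋ := by
    apply Int.floor_le_floor
    have h1 : Real.log (1/b) ≤ Real.log (1/ε) := by
      apply Real.log_le_log (by positivity)
      exact one_div_le_one_div_of_le hεpos hε2
    gcongr
  have b1 : ε ^ (-(1-D)) ≤ a ^ (-(1-D)) :=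
    Real.rpow_le_rpow_of_nonpos ha hε1.le (by have := hD1; linarith)
  have b2 : cantorTubeVolume ε ≤ (1/3) * (2/3:ℝ)^n₀ := by
    rw [cantorTubeVolume]
    have h := zpow_le_zpow_right_of_le_one₀ (by norm_num : (0:ℝ) < 2/3) (by norm_num) hn
    linarith
  have b3 : ε⁻¹ ≤ a⁻¹ := inv_anti₀ ha hε1.le
  rw [f, div_eq_mul_inv, hM]
  have h4 : (0:ℝ) ≤ ε ^ (-(1-D)) := Real.rpow_nonneg hεpos.le _
  have h5 : (0:ℝ) ≤ a ^ (-(1-D)) := Real.rpow_nonneg ha.le _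
  apply mul_le_mul (mul_le_mul b1 b2 ctv_nonneg h5) b3 (by positivity) (by positivity)

lemma intgI {a b : ℝ} (ha : 0 < a) (hb : 0 < b) : IntervalIntegrable f volume a b := by
  rw [intervalIntegrable_iff]
  rcases le_total a b with h|h
  · rw [Set.uIoc_of_le h]; exact intg ha h
  · rw [Set.uIoc_of_ge h]; exact intg hb h

lemma full (M : ℕ) : (∫ ε in (p M)..1, f ε) = M * c := by
  induction M with
  | zero => simp [p]
  | succ n ih =>
    have h := intervalIntegral.integral_add_adjacent_intervals
      (intgI (hp_pos (n+1)) (hp_pos n)) (intgI (hp_pos n) one_pos)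
    rw [← h, piece, ih]
    push_cast; ring

lemma Imono {x y : ℝ} (hx : 0 < x) (hxy : x ≤ y) :
    (∫ ε in y..1, f ε) ≤ ∫ ε in x..1, f ε := by
  have hy : 0 < y := lt_of_lt_of_le hx hxy
  rw [← intervalIntegral.integral_add_adjacent_intervals (intgI hx hy) (intgI hy one_pos)]
  have h : 0 ≤ ∫ ε in x..y, f ε :=
    intervalIntegral.integral_nonneg hxy (fun u hu => f_nonneg (lt_of_lt_of_le hx hu.1))
  linarith

lemma hp_tendsto : Tendsto p atTop (nhds 0) := by
  have : Tendsto (fun k : ℕ => (3:ℝ) ^ k) atTop atTop :=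
    tendsto_pow_atTop_atTop_of_one_lt (by norm_num)
  exact tendsto_inv_atTop_zero.comp this

lemma part1 : ¬ ∃ L : ℝ, Tendsto (fun ε : ℝ => ε ^ (-(1 - D)) * cantorTubeVolume ε)
    (nhdsWithin 0 (Set.Ioi 0)) (nhds L) := by
  rintro ⟨L, hL⟩
  set g := fun ε : ℝ => ε ^ (-(1 - D)) * cantorTubeVolume ε with hg
  -- along p n, g = 1/3
  have hx : Tendsto p atTop (nhdsWithin 0 (Set.Ioi 0)) :=
    tendsto_nhdsWithin_of_tendsto_nhds_of_eventually_within _ hp_tendsto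
      (Eventually.of_forall fun n => hp_pos n)
  have h1 : Tendsto (fun n => g (p n)) atTop (nhds L) := hL.comp hx
  have h1' : (fun n => g (p n)) = fun _ => (1/3 : ℝ) := by
    funext n
    have key : (3/2:ℝ)^n * (2/3:ℝ)^n = 1 := by rw [← mul_pow]; norm_num
    rw [hg]
    simp only
    rw [cantorTubeVolume, floor_eq (hp_lt n) le_rfl, zpow_natCast,
      show -(1-D) = D-1 by ring, hpk_rpow]
    linear_combination (1/3:ℝ) * key
  rw [h1'] at h1
  have hL13 : L = 1/3 := tendsto_nhds_unique h1 tendsto_const_nhds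
  -- along q n, g = (1/3)*(3/2)^(1/2)
  set q : ℕ → ℝ := fun n => (3:ℝ) ^ (-((n:ℝ) + 1/2)) with hq
  have hq_pos : ∀ n, 0 < q n := fun n => Real.rpow_pos_of_pos (by norm_num) _
  have hq_lt : ∀ n, p (n+1) < q n := by
    intro n
    rw [hq, hp_eq]
    apply Real.rpow_lt_rpow_left_iff (x := 3) (by norm_num) |>.2
    push_cast; linarith
  have hq_le : ∀ n, q n ≤ p n := by
    intro n
    rw [hq, hp_eq]
    apply (Real.rpow_le_rpow_left_iff (x := 3) (by norm_num)).2
    linarith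
  have hy : Tendsto q atTop (nhdsWithin 0 (Set.Ioi 0)) := by
    apply tendsto_nhdsWithin_of_tendsto_nhds_of_eventually_within
    · exact tendsto_of_tendsto_of_tendsto_of_le_of_le tendsto_const_nhds hp_tendsto
        (fun n => (hq_pos n).le) (fun n => hq_le n)
    · exact Eventually.of_forall fun n => hq_pos n
  have h2 : Tendsto (fun n => g (q n)) atTop (nhds L) := hL.comp hy
  have h2' : (fun n => g (q n)) = fun _ => (1/3 : ℝ) * (3/2:ℝ) ^ ((1:ℝ)/2) := by
    funext n
    have key : (3/2:ℝ)^n * (2/3:ℝ)^n = 1 := by rw [← mul_pow]; norm_num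
    have hqr : q n ^ (D - 1) = (3/2:ℝ)^n * (3/2:ℝ) ^ ((1:ℝ)/2) := by
      rw [hq]
      simp only
      rw [← Real.rpow_natCast (3/2:ℝ) n, ← h32, ← Real.rpow_mul (by norm_num : (0:ℝ) ≤ 3),
        ← Real.rpow_mul (by norm_num : (0:ℝ) ≤ 3),
        ← Real.rpow_mul (by norm_num : (0:ℝ) ≤ 3),
        ← Real.rpow_add (by norm_num : (0:ℝ) < 3)]
      congr 1
      ring
    rw [hg]
    simp only
    rw [cantorTubeVolume, floor_eq (hq_lt n) (hq_le n), zpow_natCast,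
      show -(1-D) = D-1 by ring, hqr]
    linear_combination ((1/3:ℝ) * (3/2:ℝ) ^ ((1:ℝ)/2)) * key
  rw [h2'] at h2
  have hL2 : L = (1/3 : ℝ) * (3/2:ℝ) ^ ((1:ℝ)/2) := tendsto_nhds_unique h2 tendsto_const_nhds
  have hgt : 1 < (3/2:ℝ) ^ ((1:ℝ)/2) := by
    rw [show (1:ℝ) = (3/2:ℝ) ^ (0:ℝ) by rw [Real.rpow_zero]]
    exact Real.rpow_lt_rpow_left_iff (by norm_num) |>.2 (by norm_num)
  rw [hL13] at hL2
  nlinarith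

lemma part2 : Tendsto (fun T : ℝ => (1 / Real.log T) * ∫ ε in (1 / T : ℝ)..1, f ε)
    atTop (nhds (1 / (6 * (Real.log 3 - Real.log 2)))) := by
  have hclim : c / Real.log 3 = 1 / (6 * (Real.log 3 - Real.log 2)) := by
    rw [c]
    rw [div_div, mul_comm (6 * _) _, ← div_div, div_self hl3.ne']
  have h0 : Tendsto (fun T : ℝ => c / Real.log T) atTop (nhds 0) :=
    tendsto_const_nhds.div_atTop Real.tendsto_log_atTop
  rw [← hclim]
  apply tendsto_of_tendsto_of_tendsto_of_le_of_le'
    (g := fun T : ℝ => c / Real.log 3 - c / Real.log T)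
    (h := fun T : ℝ => c / Real.log 3 + c / Real.log T)
  · simpa using tendsto_const_nhds.sub h0
  · simpa using tendsto_const_nhds.add h0
  · filter_upwards [eventually_ge_atTop (3:ℝ)] with T hT
    have hT0 : 0 < T := by linarith
    have hlT : Real.log 3 ≤ Real.log T := Real.log_le_log (by norm_num) hT
    have hlT0 : 0 < Real.log T := lt_of_lt_of_le hl3 hlT
    set n : ℕ := (⌊Real.log T / Real.log 3⌋).toNat with hn
    have hfl0 : (0:ℤ) ≤ ⌊Real.log T / Real.log 3⌋ :=
      Int.floor_nonneg.2 (by positivity)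
    have hcast : ((n:ℕ):ℝ) = ((⌊Real.log T / Real.log 3⌋ : ℤ) : ℝ) := by
      rw [hn]; exact_mod_cast congrArg (fun z : ℤ => (z : ℝ)) (Int.toNat_of_nonneg hfl0)
    have hn1 : (n:ℝ) ≤ Real.log T / Real.log 3 := by rw [hcast]; exact Int.floor_le _
    have hn2 : Real.log T / Real.log 3 < (n:ℝ) + 1 := by rw [hcast]; exact Int.lt_floor_add_one _
    have hn1' : (n:ℝ) * Real.log 3 ≤ Real.log T := (le_div_iff₀ hl3).1 hn1
    have hn2' : Real.log T < ((n:ℝ)+1) * Real.log 3 := (div_lt_iff₀ hl3).1 hn2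
    have hTp1 : 1/T ≤ p n := by
      rw [p, one_div]
      apply inv_anti₀ (by positivity)
      have : Real.log ((3:ℝ)^n) ≤ Real.log T := by rw [Real.log_pow]; push_cast; linarith
      exact (Real.log_le_log_iff (by positivity) hT0).1 this
    have hTp2 : p (n+1) ≤ 1/T := by
      rw [p, one_div]
      apply inv_anti₀ hT0
      have : Real.log T ≤ Real.log ((3:ℝ)^(n+1)) := by rw [Real.log_pow]; push_cast; linarith
      exact (Real.log_le_log_iff hT0 (by positivity)).1 this
    have hI1 : (n:ℝ) * c ≤ ∫ ε in (1/T : ℝ)..1, f ε := by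
      rw [← full n]; exact Imono (by positivity) hTp1
    -- lower bound
    have goal1 : c / Real.log 3 - c / Real.log T ≤ (1 / Real.log T) * ∫ ε in (1/T : ℝ)..1, f ε := by
      rw [one_div, inv_mul_eq_div, div_sub_div _ _ hl3.ne' hlT0.ne',
        div_le_div_iff₀ (by positivity) hlT0]
      have hc := hc_pos
      have k1 : (n:ℝ)*c*(Real.log 3*Real.log T) ≤ (∫ ε in (1/T : ℝ)..1, f ε)*(Real.log 3*Real.log T) :=
        mul_le_mul_of_nonneg_right hI1 (by positivity)
      have k2 : (Real.log T - Real.log 3)*(c*Real.log T) ≤ (n:ℝ)*Real.log 3*(c*Real.log T) :=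
        mul_le_mul_of_nonneg_right (by linarith) (by positivity)
      nlinarith [k1, k2]
    exact goal1
  · filter_upwards [eventually_ge_atTop (3:ℝ)] with T hT
    have hT0 : 0 < T := by linarith
    have hlT : Real.log 3 ≤ Real.log T := Real.log_le_log (by norm_num) hT
    have hlT0 : 0 < Real.log T := lt_of_lt_of_le hl3 hlT
    set n : ℕ := (⌊Real.log T / Real.log 3⌋).toNat with hn
    have hfl0 : (0:ℤ) ≤ ⌊Real.log T / Real.log 3⌋ :=
      Int.floor_nonneg.2 (by positivity)
    have hcast : ((n:ℕ):ℝ) = ((⌊Real.log T / Real.log 3⌋ : ℤ) : ℝ) := by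
      rw [hn]; exact_mod_cast congrArg (fun z : ℤ => (z : ℝ)) (Int.toNat_of_nonneg hfl0)
    have hn1 : (n:ℝ) ≤ Real.log T / Real.log 3 := by rw [hcast]; exact Int.floor_le _
    have hn1' : (n:ℝ) * Real.log 3 ≤ Real.log T := (le_div_iff₀ hl3).1 hn1
    have hTp2 : p (n+1) ≤ 1/T := by
      have hn2 : Real.log T / Real.log 3 < (n:ℝ) + 1 := by
        rw [hcast]; exact Int.lt_floor_add_one _
      have hn2' : Real.log T < ((n:ℝ)+1) * Real.log 3 := (div_lt_iff₀ hl3).1 hn2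
      rw [p, one_div]
      apply inv_anti₀ hT0
      have : Real.log T ≤ Real.log ((3:ℝ)^(n+1)) := by rw [Real.log_pow]; push_cast; linarith
      exact (Real.log_le_log_iff hT0 (by positivity)).1 this
    have hI2 : (∫ ε in (1/T : ℝ)..1, f ε) ≤ ((n:ℝ)+1) * c := by
      have := Imono (hp_pos (n+1)) hTp2
      rw [full (n+1)] at this
      push_cast at this
      linarith
    rw [one_div, inv_mul_eq_div, div_add_div _ _ hl3.ne' hlT0.ne',
      div_le_div_iff₀ hlT0 (by positivity)]
    have hc := hc_pos
    have k1 : (∫ ε in (1/T : ℝ)..1, f ε)*(Real.log 3*Real.log T) ≤ ((n:ℝ)+1)*c*(Real.log 3*Real.log T) :=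
      mul_le_mul_of_nonneg_right hI2 (by positivity)
    have k2 : (n:ℝ)*Real.log 3*(c*Real.log T) ≤ Real.log T*(c*Real.log T) :=
      mul_le_mul_of_nonneg_right hn1' (by positivity)
    have hInn : 0 ≤ ∫ ε in (1/T : ℝ)..1, f ε :=
      intervalIntegral.integral_nonneg (by rw [div_le_one hT0]; linarith)
        (fun u hu => f_nonneg (lt_of_lt_of_le (by positivity) hu.1))
    nlinarith [k1, k2]
end CA

theorem cantorString_not_measurable_average_content :
    (¬ ∃ L : ℝ, Tendsto
        (fun ε : ℝ => ε ^ (-(1 - Real.log 2 / Real.log 3)) * cantorTubeVolume ε)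
        (nhdsWithin 0 (Set.Ioi 0)) (nhds L)) ∧
    Tendsto (fun T : ℝ => (1 / Real.log T) *
        ∫ ε in (1 / T : ℝ)..1,
          ε ^ (-(1 - Real.log 2 / Real.log 3)) * cantorTubeVolume ε / ε)
      atTop (nhds (1 / (6 * (Real.log 3 - Real.log 2)))) :=
  ⟨CA.part1, CA.part2⟩
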